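/- For all integers m ≥ 1, n ≥ 1, w with 0 ≤ w ≤ n, and D ≥ 1: Σ_{i₁+⋯+i_m ≤ D-1} ∏_{j=1}^m C(w,i_j)·C(n-w,i_j) ≤ Σ_{0 ≤ i ≤ D-1} C(mw,i)·C(m(n-w),i), where the left sum ranges over m-tuples of nonnegative integers and C denotes the binomial coefficient. -/

import Mathlib

open Finset

section Aux

open PowerSeries Polynomial

/-- Multi-fold Vandermonde: sum over `finsuppAntidiag` of products of binomials. -/
lemma multi_vandermonde (m w i : ℕ) :
    ∑ l ∈ finsuppAntidiag (univ : Finset (Fin m)) i, ∏ j, Nat.choose w (l j)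
      = Nat.choose (m * w) i := by
  have h := PowerSeries.coeff_prod
      (fun _ : Fin m => ((((1 + Polynomial.X) ^ w : ℕ[X]) : PowerSeries ℕ))) i
      (univ : Finset (Fin m))
  have hL : (PowerSeries.coeff (R := ℕ) i)
      (∏ _j : Fin m, ((((1 + Polynomial.X) ^ w : ℕ[X]) : PowerSeries ℕ)))
      = Nat.choose (m * w) i := by
    rw [Finset.prod_const, card_univ, Fintype.card_fin, ← Polynomial.coe_pow, ← pow_mul,
      Polynomial.coeff_coe, mul_comm w m, Polynomial.coeff_one_add_X_pow]
    simp
  rw [hL] at h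
  rw [h]
  apply Finset.sum_congr rfl
  intro l _
  apply Finset.prod_congr rfl
  intro j _
  rw [Polynomial.coeff_coe, Polynomial.coeff_one_add_X_pow, Nat.cast_id]

/-- Reindex sums over tuples `Fin m → Fin D` with a fixed total `i < D` as
sums over `finsuppAntidiag`. -/
lemma reindex (m D i : ℕ) (hi : i < D) (g : ℕ → ℕ) :
    ∑ t ∈ univ.filter (fun t : Fin m → Fin D => (∑ j, (t j : ℕ)) = i), ∏ j, g (t j)
      = ∑ l ∈ finsuppAntidiag (univ : Finset (Fin m)) i, ∏ j, g (l j) := by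
  have key : ∀ l ∈ finsuppAntidiag (univ : Finset (Fin m)) i, ∀ j : Fin m, l j < D := by
    intro l hl j
    rw [mem_finsuppAntidiag] at hl
    have : l j ≤ i := by
      rw [← hl.1]
      exact Finset.single_le_sum (fun _ _ => Nat.zero_le _) (mem_univ j)
    omega
  refine Finset.sum_nbij'
    (i := fun t => Finsupp.equivFunOnFinite.symm (fun j => (t j : ℕ)))
    (j := fun l => fun j => ⟨l j % D, Nat.mod_lt _ (by omega)⟩) ?_ ?_ ?_ ?_ ?_
  · intro t ht
    rw [mem_finsuppAntidiag]
    refine ⟨?_, Finset.subset_univ _⟩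
    rw [mem_filter] at ht
    simpa using ht.2
  · intro l hl
    rw [mem_filter]
    refine ⟨mem_univ _, ?_⟩
    rw [mem_finsuppAntidiag] at hl
    simp only [Nat.mod_eq_of_lt (key l (by rw [mem_finsuppAntidiag]; exact hl) _)]
    simpa using hl.1
  · intro t ht
    funext j
    simp [Nat.mod_eq_of_lt (t j).isLt]
  · intro l hl
    ext j
    simp [Nat.mod_eq_of_lt (key l hl j)]
  · intro t ht
    apply Finset.prod_congr rfl
    intro j _
    simp

end Aux

/-- The product-form ball volume of the multiply constant-weight metric is
dominated by a single Johnson-scheme ball of the aggregated parameters: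
`∑_{i₁+⋯+i_m ≤ D-1} ∏_j C(w,i_j)·C(n-w,i_j) ≤ ∑_{i ≤ D-1} C(mw,i)·C(m(n-w),i)`. -/
theorem tuple_ball_le_aggregate_ball (m n w D : ℕ)
    (hm : 1 ≤ m) (hn : 1 ≤ n) (hw : w ≤ n) (hD : 1 ≤ D) :
    (∑ t ∈ univ.filter (fun t : Fin m → Fin D => (∑ j, (t j : ℕ)) ≤ D - 1),
        ∏ j, Nat.choose w (t j) * Nat.choose (n - w) (t j))
      ≤ ∑ i ∈ Finset.range D, Nat.choose (m * w) i * Nat.choose (m * (n - w)) i := by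
  set v := n - w with hv
  set T := univ.filter (fun t : Fin m → Fin D => (∑ j, (t j : ℕ)) ≤ D - 1) with hT
  have hmaps : ∀ t ∈ T, (∑ j, (t j : ℕ)) ∈ Finset.range D := by
    intro t ht
    rw [hT, mem_filter] at ht
    rw [Finset.mem_range]
    omega
  rw [← Finset.sum_fiberwise_of_maps_to hmaps
    (fun t => ∏ j, Nat.choose w (t j) * Nat.choose v (t j))]
  apply Finset.sum_le_sum
  intro i hi
  rw [Finset.mem_range] at hi
  have hTfilter : T.filter (fun t : Fin m → Fin D => (∑ j, (t j : ℕ)) = i)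
      = univ.filter (fun t : Fin m → Fin D => (∑ j, (t j : ℕ)) = i) := by
    rw [hT, Finset.filter_filter]
    apply Finset.filter_congr
    intro t _
    constructor
    · rintro ⟨_, h⟩; exact h
    · intro h; exact ⟨by omega, h⟩
  rw [hTfilter]
  set S := univ.filter (fun t : Fin m → Fin D => (∑ j, (t j : ℕ)) = i) with hS
  calc ∑ t ∈ S, ∏ j, Nat.choose w (t j) * Nat.choose v (t j)
      = ∑ t ∈ S, (∏ j, Nat.choose w (t j)) * (∏ j, Nat.choose v (t j)) := by
        apply Finset.sum_congr rfl
        intro t _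
        rw [Finset.prod_mul_distrib]
    _ ≤ ∑ t ∈ S, (∏ j, Nat.choose w (t j)) * (∑ s ∈ S, ∏ j, Nat.choose v (s j)) := by
        apply Finset.sum_le_sum
        intro t ht
        exact Nat.mul_le_mul_left _
          (Finset.single_le_sum (f := fun s => ∏ j, Nat.choose v (s j))
            (fun _ _ => Nat.zero_le _) ht)
    _ = (∑ t ∈ S, ∏ j, Nat.choose w (t j)) * (∑ s ∈ S, ∏ j, Nat.choose v (s j)) := by
        rw [← Finset.sum_mul]
    _ = Nat.choose (m * w) i * Nat.choose (m * v) i := by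
        rw [hS, reindex m D i hi, reindex m D i hi, multi_vandermonde, multi_vandermonde]
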